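/- Let P be a probability measure and h measurable with exp(h) ∈ L¹(P). Then log E_P[exp h] = sup over probability measures Q ≪ P of ( E_Q[h] − KL(Q‖P) ). -/

import Mathlib

open MeasureTheory Real Filter
open scoped ENNReal

lemma dv_upper {Θ : Type*} [MeasurableSpace Θ]
    (P : Measure Θ) [IsProbabilityMeasure P] (h : Θ → ℝ) (hm : Measurable h)
    (hexp : Integrable (fun θ => Real.exp (h θ)) P)
    (Q : Measure Θ) [IsProbabilityMeasure Q] (hQP : Q ≪ P)
    (hInt : Integrable h Q)
    (hIntLog : Integrable (fun θ => Real.log (Q.rnDeriv P θ).toReal) Q) :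
    (∫ θ, h θ ∂Q) - (∫ θ, Real.log (Q.rnDeriv P θ).toReal ∂Q)
      ≤ Real.log (∫ θ, Real.exp (h θ) ∂P) := by
  set Z : ℝ := ∫ θ, Real.exp (h θ) ∂P with hZ
  have hZpos : 0 < Z := integral_exp_pos hexp
  set φ : Θ → ℝ := fun θ => h θ - Real.log (Q.rnDeriv P θ).toReal - (Real.log Z - 1) with hφ
  have hφint : Integrable φ Q := (hInt.sub hIntLog).sub (integrable_const _)
  set ψ : Θ → ℝ := fun θ => Real.exp (h θ) / ((Q.rnDeriv P θ).toReal * Z) with hψ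
  -- pointwise inequality Q-a.e.
  have hae : ∀ᵐ θ ∂Q, φ θ ≤ ψ θ := by
    filter_upwards [Measure.rnDeriv_pos hQP, hQP.ae_le (Measure.rnDeriv_lt_top Q P)]
      with θ hpos hlt
    set t : ℝ := (Q.rnDeriv P θ).toReal with ht
    have htpos : 0 < t := ENNReal.toReal_pos hpos.ne' hlt.ne
    have hx : 0 < Real.exp (h θ) / (t * Z) := by positivity
    have hlog : Real.log (Real.exp (h θ) / (t * Z)) ≤ Real.exp (h θ) / (t * Z) - 1 :=
      Real.log_le_sub_one_of_pos hx
    rw [Real.log_div (Real.exp_pos _).ne' (by positivity), Real.log_exp,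
      Real.log_mul htpos.ne' hZpos.ne'] at hlog
    simp only [hφ, hψ]
    linarith
  -- lintegral bound
  have hmeasρ : Measurable (Q.rnDeriv P) := Measure.measurable_rnDeriv Q P
  have hψmeas : Measurable ψ := by
    apply Measurable.div (hm.exp)
    exact hmeasρ.ennreal_toReal.mul measurable_const
  have key : (∫⁻ θ, ENNReal.ofReal (φ θ) ∂Q) ≤ 1 := by
    calc (∫⁻ θ, ENNReal.ofReal (φ θ) ∂Q) ≤ ∫⁻ θ, ENNReal.ofReal (ψ θ) ∂Q := by
          refine lintegral_mono_ae ?_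
          filter_upwards [hae] with θ hθ using ENNReal.ofReal_le_ofReal hθ
      _ ≤ ∫⁻ θ, ENNReal.ofReal (Real.exp (h θ) / Z) ∂P := by
          conv_lhs => rw [← Measure.withDensity_rnDeriv_eq Q P hQP]
          rw [lintegral_withDensity_eq_lintegral_mul P hmeasρ hψmeas.ennreal_ofReal]
          refine lintegral_mono_ae ?_
          filter_upwards [Measure.rnDeriv_lt_top Q P] with θ hlt
          simp only [Pi.mul_apply, Function.comp]
          rcases eq_or_ne (Q.rnDeriv P θ) 0 with h0 | h0
          · simp [h0]
          · have htpos : 0 < (Q.rnDeriv P θ).toReal := ENNReal.toReal_pos h0 hlt.ne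
            have : Q.rnDeriv P θ = ENNReal.ofReal (Q.rnDeriv P θ).toReal := by
              rw [ENNReal.ofReal_toReal hlt.ne]
            rw [this, ← ENNReal.ofReal_mul htpos.le]
            apply ENNReal.ofReal_le_ofReal
            apply le_of_eq
            show (Q.rnDeriv P θ).toReal * (rexp (h θ) / ((Q.rnDeriv P θ).toReal * Z)) = _
            field_simp
      _ = ENNReal.ofReal (∫ θ, Real.exp (h θ) / Z ∂P) := by
          rw [ofReal_integral_eq_lintegral_ofReal (hexp.div_const Z)]
          exact Eventually.of_forall fun θ => by positivity
      _ = 1 := by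
          rw [integral_div, ← hZ, div_self hZpos.ne', ENNReal.ofReal_one]
  have hle : ∫ θ, φ θ ∂Q ≤ 1 := by
    rw [integral_eq_lintegral_pos_part_sub_lintegral_neg_part hφint]
    have h1 : (∫⁻ θ, ENNReal.ofReal (φ θ) ∂Q).toReal ≤ 1 :=
      ENNReal.toReal_le_of_le_ofReal zero_le_one (by simpa using key)
    have h2 : 0 ≤ (∫⁻ θ, ENNReal.ofReal (-φ θ) ∂Q).toReal := ENNReal.toReal_nonneg
    linarith
  have : ∫ θ, φ θ ∂Q
      = (∫ θ, h θ ∂Q) - (∫ θ, Real.log (Q.rnDeriv P θ).toReal ∂Q) - (Real.log Z - 1) := by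
    have hsub : Integrable (fun θ => h θ - Real.log (Q.rnDeriv P θ).toReal) Q :=
      hInt.sub hIntLog
    rw [hφ, integral_sub hsub (integrable_const _), integral_sub hInt hIntLog, integral_const]
    simp
  rw [this] at hle
  linarith

lemma dv_mem {Θ : Type*} [MeasurableSpace Θ]
    (P : Measure Θ) [IsProbabilityMeasure P] (h : Θ → ℝ) (hm : Measurable h)
    (hexp : Integrable (fun θ => Real.exp (h θ)) P) (M : ℝ) (hM : 0 ≤ M)
    (hZM : 0 < ∫ θ, (if -M ≤ h θ then Real.exp (min (h θ) M) else 0) ∂P) :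
    ∃ Q : Measure Θ, IsProbabilityMeasure Q ∧ Q ≪ P ∧ Integrable h Q ∧
      Integrable (fun θ => Real.log ((Q.rnDeriv P θ).toReal)) Q ∧
      Real.log (∫ θ, (if -M ≤ h θ then Real.exp (min (h θ) M) else 0) ∂P)
        ≤ (∫ θ, h θ ∂Q) - ∫ θ, Real.log ((Q.rnDeriv P θ).toReal) ∂Q := by
  set g : Θ → ℝ := fun θ => if -M ≤ h θ then Real.exp (min (h θ) M) else 0 with hg
  set ZM : ℝ := ∫ θ, g θ ∂P with hZMdef
  have hgmeas : Measurable g := by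
    exact Measurable.ite (measurableSet_le measurable_const hm)
      ((hm.min measurable_const).exp) measurable_const
  have hg0 : ∀ θ, 0 ≤ g θ := by
    intro θ; simp only [hg]; split <;> positivity
  have hgle : ∀ θ, g θ ≤ Real.exp (h θ) := by
    intro θ; simp only [hg]; split
    · exact Real.exp_le_exp.mpr (min_le_left _ _)
    · positivity
  have hgint : Integrable g P :=
    hexp.mono' hgmeas.aestronglyMeasurable
      (Eventually.of_forall fun θ => by
        rw [Real.norm_eq_abs, abs_of_nonneg (hg0 θ)]; exact hgle θ)
  set ρ : Θ → ℝ≥0∞ := fun θ => ENNReal.ofReal (g θ / ZM) with hρ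
  have hρmeas : Measurable ρ := (hgmeas.div_const _).ennreal_ofReal
  set Q : Measure Θ := P.withDensity ρ with hQdef
  have hQP : Q ≪ P := withDensity_absolutelyContinuous _ _
  have hlρ : ∫⁻ θ, ρ θ ∂P = 1 := by
    rw [hρ, ← ofReal_integral_eq_lintegral_ofReal (hgint.div_const ZM)
      (Eventually.of_forall fun θ => by positivity)]
    rw [integral_div, ← hZMdef, div_self hZM.ne', ENNReal.ofReal_one]
  haveI hQprob : IsProbabilityMeasure Q := by
    constructor
    rw [hQdef, withDensity_apply _ MeasurableSet.univ, Measure.restrict_univ, hlρ]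
  have hrn : Q.rnDeriv P =ᵐ[P] ρ := Measure.rnDeriv_withDensity P hρmeas
  have hrnQ : ∀ᵐ θ ∂Q, Q.rnDeriv P θ = ρ θ := hQP.ae_le hrn
  have hQpos : ∀ᵐ θ ∂Q, 0 < g θ := by
    rw [ae_iff]
    have hset : {θ | ¬0 < g θ} = {θ | g θ ≤ 0} := by ext θ; simp [not_lt]
    have hAmeas : MeasurableSet {θ | g θ ≤ 0} := measurableSet_le hgmeas measurable_const
    rw [hset, hQdef, withDensity_apply _ hAmeas]
    have : ∀ θ ∈ {θ | g θ ≤ 0}, ρ θ = 0 := by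
      intro θ hθ
      have : g θ = 0 := le_antisymm hθ (hg0 θ)
      simp [hρ, this]
    calc ∫⁻ θ in {θ | g θ ≤ 0}, ρ θ ∂P = ∫⁻ _ in {θ | g θ ≤ 0}, 0 ∂P :=
          setLIntegral_congr_fun hAmeas this
      _ = 0 := by simp
  have hcond : ∀ᵐ θ ∂Q, -M ≤ h θ := by
    filter_upwards [hQpos] with θ hθ
    by_contra hc
    simp only [hg, if_neg hc] at hθ
    exact lt_irrefl 0 hθ
  have hLeq : (fun θ => Real.log ((Q.rnDeriv P θ).toReal))
      =ᵐ[Q] fun θ => min (h θ) M - Real.log ZM := by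
    filter_upwards [hQpos, hrnQ, hcond] with θ hθpos hθrn hθc
    rw [hθrn, hρ]
    rw [ENNReal.toReal_ofReal (by positivity)]
    rw [Real.log_div hθpos.ne' hZM.ne']
    simp only [hg, if_pos hθc] at hθpos ⊢
    rw [Real.log_exp]
  -- integrability of h wrt Q
  have hbound : ∀ θ, |h θ| * g θ ≤ M * Real.exp M + Real.exp M * Real.exp (h θ) := by
    intro θ
    by_cases hc : -M ≤ h θ
    · simp only [hg, if_pos hc]
      by_cases hc2 : h θ ≤ M
      · have h1 : |h θ| ≤ M := abs_le.mpr ⟨hc, hc2⟩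
        have h2 : Real.exp (min (h θ) M) ≤ Real.exp M :=
          Real.exp_le_exp.mpr (min_le_right _ _)
        nlinarith [Real.exp_pos (h θ), Real.exp_pos M, abs_nonneg (h θ),
          Real.exp_pos (min (h θ) M)]
      · push_neg at hc2
        have h0 : 0 ≤ h θ := le_trans hM hc2.le
        have h1 : |h θ| = h θ := abs_of_nonneg h0
        have h2 : min (h θ) M = M := min_eq_right hc2.le
        have h3 : h θ ≤ Real.exp (h θ) := by
          have := Real.add_one_le_exp (h θ); linarith
        rw [h1, h2]
        nlinarith [Real.exp_pos M, Real.exp_pos (h θ)]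
    · simp only [hg, if_neg hc]
      have := Real.exp_pos M
      have := Real.exp_pos (h θ)
      nlinarith
  have hinth : Integrable h Q := by
    rw [hQdef, integrable_withDensity_iff hρmeas
      (Eventually.of_forall fun θ => ENNReal.ofReal_lt_top)]
    have hBint : Integrable
        (fun θ => (M * Real.exp M + Real.exp M * Real.exp (h θ)) / ZM) P :=
      ((integrable_const _).add (hexp.const_mul _)).div_const _
    refine hBint.mono' ((hm.mul hρmeas.ennreal_toReal).aestronglyMeasurable) ?_
    refine Eventually.of_forall fun θ => ?_
    rw [Real.norm_eq_abs, abs_mul, hρ, ENNReal.toReal_ofReal (by positivity),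
      abs_of_nonneg (by positivity : (0:ℝ) ≤ g θ / ZM)]
    calc |h θ| * (g θ / ZM) = (|h θ| * g θ) / ZM := by ring
      _ ≤ _ := by gcongr; exact hbound θ
  have hmin : Integrable (fun θ => min (h θ) M) Q := by
    refine (integrable_const M).mono' ((hm.min measurable_const).aestronglyMeasurable) ?_
    filter_upwards [hcond] with θ hθ
    rw [Real.norm_eq_abs, abs_le]
    constructor
    · have : -M ≤ min (h θ) M := le_min hθ (by linarith)
      linarith [this]
    · exact min_le_right _ _
  have hL : Integrable (fun θ => Real.log ((Q.rnDeriv P θ).toReal)) Q :=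
    (hmin.sub (integrable_const _)).congr hLeq.symm
  have hLint : ∫ θ, Real.log ((Q.rnDeriv P θ).toReal) ∂Q
      = (∫ θ, min (h θ) M ∂Q) - Real.log ZM := by
    rw [integral_congr_ae hLeq, integral_sub hmin (integrable_const _), integral_const]
    simp
  refine ⟨Q, hQprob, hQP, hinth, hL, ?_⟩
  rw [hLint]
  have : ∫ θ, min (h θ) M ∂Q ≤ ∫ θ, h θ ∂Q :=
    integral_mono hmin hinth fun θ => min_le_left _ _
  linarith

/-- Donsker–Varadhan duality formula: `log E_P[exp h]` is the least upper bound of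
`E_Q[h] − KL(Q‖P)` over probability measures `Q ≪ P` for which both quantities are
well-defined. -/
theorem duality_formula_isLUB {Θ : Type*} [MeasurableSpace Θ]
    (P : Measure Θ) [IsProbabilityMeasure P] (h : Θ → ℝ) (hm : Measurable h)
    (hexp : Integrable (fun θ => Real.exp (h θ)) P) :
    IsLUB {x : ℝ | ∃ Q : Measure Θ, IsProbabilityMeasure Q ∧ Q ≪ P ∧
        Integrable h Q ∧
        Integrable (fun θ => Real.log (Q.rnDeriv P θ).toReal) Q ∧
        x = (∫ θ, h θ ∂Q) - ∫ θ, Real.log (Q.rnDeriv P θ).toReal ∂Q}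
      (Real.log (∫ θ, Real.exp (h θ) ∂P)) := by
  have hZpos : 0 < ∫ θ, Real.exp (h θ) ∂P := integral_exp_pos hexp
  constructor
  · rintro x ⟨Q, hQprob, hQP, hInt, hIntLog, rfl⟩
    exact dv_upper P h hm hexp Q hQP hInt hIntLog
  · intro b hb
    set F : ℕ → Θ → ℝ :=
      fun M θ => if -(M : ℝ) ≤ h θ then Real.exp (min (h θ) (M : ℝ)) else 0 with hF
    have hFmeas : ∀ M : ℕ, AEStronglyMeasurable (F M) P := fun M =>
      (Measurable.ite (measurableSet_le measurable_const hm)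
        ((hm.min measurable_const).exp) measurable_const).aestronglyMeasurable
    have hFbound : ∀ M : ℕ, ∀ᵐ θ ∂P, ‖F M θ‖ ≤ Real.exp (h θ) := by
      intro M
      refine Eventually.of_forall fun θ => ?_
      rw [Real.norm_eq_abs]
      simp only [hF]
      split
      · rw [abs_of_nonneg (Real.exp_pos _).le]
        exact Real.exp_le_exp.mpr (min_le_left _ _)
      · simp [Real.exp_pos, (Real.exp_pos (h θ)).le]
    have hFlim : ∀ᵐ θ ∂P, Tendsto (fun M : ℕ => F M θ) atTop
        (nhds (Real.exp (h θ))) := by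
      refine Eventually.of_forall fun θ => ?_
      refine Tendsto.congr' ?_ tendsto_const_nhds
      filter_upwards [eventually_ge_atTop ⌈|h θ|⌉₊] with M hM
      have hM' : |h θ| ≤ (M : ℝ) := le_trans (Nat.le_ceil _) (Nat.cast_le.mpr hM)
      rw [abs_le] at hM'
      rw [hF]
      simp only
      rw [if_pos hM'.1, min_eq_left hM'.2]
    have hZtend : Tendsto (fun M : ℕ => ∫ θ, F M θ ∂P) atTop
        (nhds (∫ θ, Real.exp (h θ) ∂P)) :=
      tendsto_integral_of_dominated_convergence _ hFmeas hexp hFbound hFlim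
    have hev : ∀ᶠ M : ℕ in atTop, 0 < ∫ θ, F M θ ∂P :=
      hZtend.eventually (eventually_gt_nhds hZpos)
    have hloglb : ∀ᶠ M : ℕ in atTop, Real.log (∫ θ, F M θ ∂P) ≤ b := by
      filter_upwards [hev] with M hM
      obtain ⟨Q, hQprob, hQP, hInt, hIntLog, hle⟩ :=
        dv_mem P h hm hexp (M : ℝ) (Nat.cast_nonneg M) hM
      refine le_trans hle (hb ⟨Q, hQprob, hQP, hInt, hIntLog, rfl⟩)
    have hlogtend : Tendsto (fun M : ℕ => Real.log (∫ θ, F M θ ∂P)) atTop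
        (nhds (Real.log (∫ θ, Real.exp (h θ) ∂P))) :=
      ((Real.continuousAt_log hZpos.ne').tendsto.comp hZtend)
    exact le_of_tendsto hlogtend hloglb
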